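/- If T is a hypercyclic linear operator in X, then (T, Y0) is topologically transitive, where Y0 = ⋂_{n≥1} D(T^n). That is, HC ⇒ TT for unbounded linear operators. -/

import Mathlib

open Set Filter Topology

variable {X : Type*} [NormedAddCommGroup X] [NormedSpace ℝ X] [CompleteSpace X]

/-- The natural domain of the n-th power of an operator `T` with domain `D`:
`D(T^0) = X`, `D(T^{n+1}) = {x ∈ D(T^n) : T^n x ∈ D}`. -/
def pdom (D : Submodule ℝ X) (T : X →ₗ[ℝ] X) : ℕ → Set X
  | 0 => Set.univ
  | n + 1 => {x | x ∈ pdom D T n ∧ (⇑T)^[n] x ∈ (D : Set X)}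

/-- `Y0 = ⋂_{n ≥ 1} D(T^n)`, the maximal dynamical domain. -/
def Y0 (D : Submodule ℝ X) (T : X →ₗ[ℝ] X) : Set X := ⋂ n : ℕ, pdom D T (n + 1)

/-- The orbit of `x` under `T`. -/
def orb (T : X →ₗ[ℝ] X) (x : X) : Set X := Set.range fun n : ℕ => (⇑T)^[n] x

/-- The set of hypercyclic vectors of `T`. -/
def HCset (D : Submodule ℝ X) (T : X →ₗ[ℝ] X) : Set X :=
  {x | x ∈ Y0 D T ∧ Dense (orb T x)}

/-- The set of relatively hypercyclic vectors of `(T, Y)`. -/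
def RHCset (D : Submodule ℝ X) (T : X →ₗ[ℝ] X) (Y : Set X) : Set X :=
  {x | x ∈ Y0 D T ∧ x ≠ 0 ∧ Y ⊆ closure (orb T x ∩ Y)}

/-- `(T, Y)` is topologically transitive (w.r.t. the subspace topology on `Y`). -/
def TT (T : X →ₗ[ℝ] X) (Y : Set X) : Prop :=
  ∀ G H : Set X, IsOpen G → IsOpen H → (G ∩ Y).Nonempty → (H ∩ Y).Nonempty →
    ∃ n : ℕ, ((⇑T)^[n] '' (G ∩ Y) ∩ (H ∩ Y)).Nonempty

/-- `(T, Y)` is mixing. -/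
def Mixing (T : X →ₗ[ℝ] X) (Y : Set X) : Prop :=
  ∀ G H : Set X, IsOpen G → IsOpen H → (G ∩ Y).Nonempty → (H ∩ Y).Nonempty →
    ∃ N : ℕ, ∀ n ≥ N, ((⇑T)^[n] '' (G ∩ Y) ∩ (H ∩ Y)).Nonempty

/-- `(T, Y)` is strongly topologically transitive. -/
def STT (T : X →ₗ[ℝ] X) (Y : Set X) : Prop :=
  ∀ G : Set X, IsOpen G → (G ∩ Y).Nonempty →
    Y \ {0} ⊆ ⋃ n : ℕ, (⇑T)^[n] '' (G ∩ Y)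

/-- `(T, Y)` is hypermixing. -/
def HM (T : X →ₗ[ℝ] X) (Y : Set X) : Prop :=
  ∀ G : Set X, IsOpen G → (G ∩ Y).Nonempty →
    Y \ {0} ⊆ ⋃ i : ℕ, ⋂ n : ℕ, ⋂ (_ : i ≤ n), (⇑T)^[n] '' (G ∩ Y)

/-- `(T, Y)` is supermixing. -/
def SM (T : X →ₗ[ℝ] X) (Y : Set X) : Prop :=
  ∀ G : Set X, IsOpen G → (G ∩ Y).Nonempty →
    Y ⊆ closure ((⋃ i : ℕ, ⋂ n : ℕ, ⋂ (_ : i ≤ n), (⇑T)^[n] '' (G ∩ Y)) ∩ Y)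

/-- The generalized kernel `GK(T) = ⋃_{n ≥ 1} Ker T^n`. -/
def GK (D : Submodule ℝ X) (T : X →ₗ[ℝ] X) : Set X :=
  ⋃ n : ℕ, {x | x ∈ pdom D T (n + 1) ∧ (⇑T)^[n + 1] x = 0}


lemma pdom_iter (D : Submodule ℝ X) (T : X →ₗ[ℝ] X) (n : ℕ) :
    ∀ m x, x ∈ pdom D T (m + n) → (⇑T)^[m] x ∈ pdom D T n := by
  induction n with
  | zero => intro m x _; trivial
  | succ n ih =>
    intro m x hx
    obtain ⟨h1, h2⟩ := hx
    refine ⟨ih m x h1, ?_⟩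
    rw [← Function.iterate_add_apply]
    rwa [Nat.add_comm]

lemma Y0_iter (D : Submodule ℝ X) (T : X →ₗ[ℝ] X) (m : ℕ) {x : X}
    (hx : x ∈ Y0 D T) : (⇑T)^[m] x ∈ Y0 D T := by
  intro s hs
  simp only [Set.mem_range] at hs
  obtain ⟨n, rfl⟩ := hs
  have := hx (pdom D T (m + n + 1)) ⟨m + n, rfl⟩
  exact pdom_iter D T (n + 1) m x (by rwa [show m + (n+1) = m + n + 1 from rfl])

/-- `HC ⇒ TT`: if `T` is hypercyclic, then `(T, Y0)` is topologically transitive. -/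
theorem stmt5 [TopologicalSpace.SeparableSpace X] (hinf : ¬ FiniteDimensional ℝ X)
    (D : Submodule ℝ X) (T : X →ₗ[ℝ] X)
    (hhc : ∃ x, x ∈ HCset D T) :
    TT T (Y0 D T) := by
  obtain ⟨x, hxY, hxd⟩ := hhc
  have hnt : Nontrivial X := by
    by_contra h
    rw [not_nontrivial_iff_subsingleton] at h
    exact hinf (Module.Finite.of_basis (Module.Basis.empty X (ι := Fin 0)))
  intro G H hG hH ⟨g, hgG, hgY⟩ hHne
  have hGne : (G ∩ orb T x).Nonempty := hxd.inter_open_nonempty G hG ⟨g, hgG⟩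
  obtain ⟨y, hyG, m, rfl⟩ := hGne
  have htail : Dense (Set.range fun k : ℕ => (⇑T)^[k + m] x) := by
    have hfin : (Set.Finite ((fun k : ℕ => (⇑T)^[k] x) '' (Set.Iio m))) :=
      (Set.finite_Iio m).image _
    have hd : Dense (orb T x \ ((fun k : ℕ => (⇑T)^[k] x) '' (Set.Iio m))) :=
      hxd.diff_finite hfin
    refine hd.mono ?_
    rintro z ⟨⟨k, rfl⟩, hz2⟩
    rcases lt_or_ge k m with hk | hk
    · exact absurd ⟨k, hk, rfl⟩ hz2
    · exact ⟨k - m, by simp [Nat.sub_add_cancel hk]⟩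
  obtain ⟨h0, hh0H⟩ := hHne
  have hHne' : ((Set.range fun k : ℕ => (⇑T)^[k + m] x) ∩ H).Nonempty := by
    have := htail.inter_open_nonempty H hH ⟨h0, hh0H.1⟩
    exact this.imp fun z hz => ⟨hz.2, hz.1⟩
  obtain ⟨z, ⟨n, rfl⟩, hzH⟩ := hHne'
  refine ⟨n, (⇑T)^[n + m] x, ⟨(⇑T)^[m] x, ⟨hyG, Y0_iter D T m hxY⟩, ?_⟩,
    hzH, Y0_iter D T (n + m) hxY⟩
  rw [← Function.iterate_add_apply]
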